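/- In Hirota's discrete KdV equation specialized as the case ε = 1, h = 1 of the periodic reduction: let γ : ℤ → ℂ with γ(n+2) = ε·γ(n) and X : ℤ → ℂ* satisfy X(n+2)·X(n) = −(1/X(n+1))·(1/X(n+1) + γ(n)) for all n. Then u(l,m) := i/(X(l−2m)·X(l−2m+1)) satisfies ε·u(l+1,m+1) − u(l,m) = ε/u(l,m+1) − 1/u(l+1,m) and u(l+2,m+1) = u(l,m) for all l,m. -/

import Mathlib

theorem stmt_9 (ε : ℂ) (hε : ε ≠ 0) (γ : ℤ → ℂ)
    (hγ : ∀ n : ℤ, γ (n + 2) = ε * γ n)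
    (X : ℤ → ℂ) (hX : ∀ n : ℤ, X n ≠ 0)
    (hXeq : ∀ n : ℤ,
      X (n + 2) * X n = -(1 / X (n + 1)) * (1 / X (n + 1) + γ n))
    (u : ℤ × ℤ → ℂ)
    (hu : ∀ l m : ℤ, u (l, m) = Complex.I / (X (l - 2 * m) * X (l - 2 * m + 1))) :
    (∀ l m : ℤ,
      ε * u (l + 1, m + 1) - u (l, m) = ε / u (l, m + 1) - 1 / u (l + 1, m)) ∧
    (∀ l m : ℤ, u (l + 2, m + 1) = u (l, m)) := by
  constructor
  · intro l m
    have h1 := hu (l + 1) (m + 1)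
    have h2 := hu l m
    have h3 := hu l (m + 1)
    have h4 := hu (l + 1) m
    rw [show (l + 1 - 2 * (m + 1) : ℤ) = l - 2 * m - 1 by ring,
        show (l - 2 * m - 1 + 1 : ℤ) = l - 2 * m by ring] at h1
    rw [show (l - 2 * (m + 1) : ℤ) = l - 2 * m - 2 by ring,
        show (l - 2 * m - 2 + 1 : ℤ) = l - 2 * m - 1 by ring] at h3
    rw [show (l + 1 - 2 * m : ℤ) = l - 2 * m + 1 by ring, show (l - 2 * m + 1 + 1 : ℤ) = l - 2 * m + 2 by ring] at h4
    set n := l - 2 * m with hn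
    have hA := hXeq (n - 2)
    rw [show (n - 2 + 2 : ℤ) = n by ring, show (n - 2 + 1 : ℤ) = n - 1 by ring] at hA
    have hB := hXeq n
    have hC := hγ (n - 2)
    rw [show (n - 2 + 2 : ℤ) = n by ring] at hC
    rw [h1, h2, h3, h4]
    have I2 : Complex.I * Complex.I = -1 := Complex.I_mul_I
    have x0 := hX (n - 2)
    have x1 := hX (n - 1)
    have x2 := hX n
    have x3 := hX (n + 1)
    have x4 := hX (n + 2)
    have hI : Complex.I ≠ 0 := Complex.I_ne_zero
    field_simp at hA hB ⊢
    linear_combination (X (n + 1) * ε - X (n - 1)) * I2 - (ε * X (n + 1)) * hA + X (n - 1) * hB - (X (n - 1) * X (n + 1)) * hC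
  · intro l m
    rw [hu (l + 2) (m + 1), hu l m]
    ring_nf
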